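/- Let K ≥ 0 and d ≥ 0, and let μ and μ_n (n ∈ ℕ) be finite Borel measures on the interval [0, K] with μ([0,K]) = μ_n([0,K]) = d for all n, such that the moments converge: ∫ t^m dμ_n(t) → ∫ t^m dμ(t) as n → ∞, for every m ∈ ℕ. Then for every λ ∈ [0, K]: limsup_n μ_n([0,λ]) ≤ μ([0,λ]), and moreover μ([0,λ]) = lim_{ε→0⁺} liminf_n μ_n([0, λ+ε]) = lim_{ε→0⁺} limsup_n μ_n([0, λ+ε]). -/

import Mathlib

open MeasureTheory Filter
open Topology

noncomputable def trap (a b : ℝ) : ℝ → ℝ := fun t => max 0 (min 1 ((b - t) / (b - a)))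

lemma trap_cont (a b : ℝ) : Continuous (trap a b) :=
  continuous_const.max (continuous_const.min ((continuous_const.sub continuous_id).div_const _))

lemma trap_nonneg (a b t : ℝ) : 0 ≤ trap a b t := le_max_left _ _

lemma trap_le_one (a b t : ℝ) : trap a b t ≤ 1 := max_le zero_le_one (min_le_left _ _)

lemma trap_abs (a b t : ℝ) : |trap a b t| ≤ 1 :=
  abs_le.mpr ⟨by linarith [trap_nonneg a b t], trap_le_one a b t⟩

lemma trap_eq_one {a b t : ℝ} (h : a < b) (ht : t ≤ a) : trap a b t = 1 := by
  have h1 : (1:ℝ) ≤ (b - t) / (b - a) := (le_div_iff₀ (by linarith)).mpr (by linarith)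
  unfold trap
  rw [min_eq_left h1, max_eq_right zero_le_one]

lemma trap_eq_zero {a b t : ℝ} (h : a < b) (ht : b ≤ t) : trap a b t = 0 := by
  have h1 : (b - t) / (b - a) ≤ 0 := div_nonpos_of_nonpos_of_nonneg (by linarith) (by linarith)
  unfold trap
  rw [min_eq_right (by linarith), max_eq_left h1]

lemma aux_integrable {ν : Measure ℝ} [IsFiniteMeasure ν] {f : ℝ → ℝ} (hf : Continuous f)
    {C : ℝ} (hb : ∀ᵐ t ∂ν, |f t| ≤ C) : Integrable f ν := by
  refine Integrable.mono' (integrable_const C) hf.aestronglyMeasurable ?_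
  simpa [Real.norm_eq_abs] using hb

lemma aux_ae_mem {K : ℝ} {ν : Measure ℝ} (h : ν (Set.Icc 0 K)ᶜ = 0) :
    ∀ᵐ t ∂ν, t ∈ Set.Icc 0 K := by
  have : {t : ℝ | ¬ t ∈ Set.Icc 0 K} = (Set.Icc 0 K)ᶜ := rfl
  rw [MeasureTheory.ae_iff, this, h]

lemma aux_integrable_pow {K : ℝ} {ν : Measure ℝ} [IsFiniteMeasure ν]
    (h : ν (Set.Icc 0 K)ᶜ = 0) (m : ℕ) : Integrable (fun t => t ^ m) ν := by
  refine aux_integrable (continuous_pow m) (C := K ^ m) ?_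
  filter_upwards [aux_ae_mem h] with t ht
  rw [abs_pow, abs_of_nonneg ht.1]
  exact pow_le_pow_left₀ ht.1 ht.2 m

lemma aux_integral_poly {K : ℝ} {ν : Measure ℝ} [IsFiniteMeasure ν]
    (h : ν (Set.Icc 0 K)ᶜ = 0) (p : Polynomial ℝ) :
    ∫ t, p.eval t ∂ν =
      ∑ i ∈ Finset.range (p.natDegree + 1), p.coeff i * ∫ t, t ^ i ∂ν := by
  simp_rw [Polynomial.eval_eq_sum_range]
  rw [integral_finset_sum _ (fun i _ => (aux_integrable_pow h i).const_mul _)]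
  simp_rw [MeasureTheory.integral_const_mul]

lemma aux_W (K d : ℝ) (hd : 0 ≤ d) (μ : Measure ℝ) (μn : ℕ → Measure ℝ)
    [IsFiniteMeasure μ] [∀ n, IsFiniteMeasure (μn n)]
    (hsupp : μ (Set.Icc 0 K)ᶜ = 0) (hsuppn : ∀ n, μn n (Set.Icc 0 K)ᶜ = 0)
    (hmass : μ Set.univ = ENNReal.ofReal d)
    (hmassn : ∀ n, μn n Set.univ = ENNReal.ofReal d)
    (hmom : ∀ m : ℕ, Tendsto (fun n => ∫ t, t ^ m ∂(μn n)) atTop (nhds (∫ t, t ^ m ∂μ)))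
    (f : ℝ → ℝ) (hf : Continuous f) (hb : ∀ t, |f t| ≤ 1) :
    Tendsto (fun n => ∫ t, f t ∂(μn n)) atTop (nhds (∫ t, f t ∂μ)) := by
  rw [Metric.tendsto_atTop]
  intro ε hε
  set ε' := ε / (3 * (d + 1)) with hε'def
  have hε' : 0 < ε' := by positivity
  obtain ⟨p, hp⟩ := exists_polynomial_near_of_continuousOn 0 K f hf.continuousOn ε' hε'
  have hpoly : Tendsto (fun n => ∫ t, p.eval t ∂(μn n)) atTop (𝓝 (∫ t, p.eval t ∂μ)) := by
    have e1 : ∀ n, ∫ t, p.eval t ∂(μn n) =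
        ∑ i ∈ Finset.range (p.natDegree + 1), p.coeff i * ∫ t, t ^ i ∂(μn n) :=
      fun n => aux_integral_poly (hsuppn n) p
    rw [aux_integral_poly hsupp p]
    simp only [e1]
    exact tendsto_finset_sum _ fun i _ => (hmom i).const_mul _
  have key : ∀ (ν : Measure ℝ) (_ : IsFiniteMeasure ν), ν (Set.Icc 0 K)ᶜ = 0 →
      ν Set.univ = ENNReal.ofReal d →
      |∫ t, f t ∂ν - ∫ t, p.eval t ∂ν| ≤ ε' * d := by
    intro ν instν h0 hm
    haveI := instν
    have hif : Integrable f ν := aux_integrable hf (Eventually.of_forall hb)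
    have hip : Integrable (fun t => p.eval t) ν := by
      refine aux_integrable p.continuous (C := 1 + ε') ?_
      filter_upwards [aux_ae_mem h0] with t ht
      have h1 := hp t ht
      calc |p.eval t| = |f t + (p.eval t - f t)| := by ring_nf
        _ ≤ |f t| + |p.eval t - f t| := abs_add_le _ _
        _ ≤ 1 + ε' := add_le_add (hb t) h1.le
    rw [← integral_sub hif hip]
    have hbound : ∀ᵐ t ∂ν, ‖f t - p.eval t‖ ≤ ε' := by
      filter_upwards [aux_ae_mem h0] with t ht
      rw [Real.norm_eq_abs, abs_sub_comm]
      exact (hp t ht).le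
    have h2 := norm_integral_le_of_norm_le_const (μ := ν) hbound
    rw [measureReal_def, hm, ENNReal.toReal_ofReal hd] at h2
    exact h2
  have hεd : ε' * d ≤ ε / 3 := by
    rw [hε'def, div_mul_eq_mul_div, div_le_div_iff₀ (by positivity) (by norm_num)]
    nlinarith
  obtain ⟨N, hN⟩ := (Metric.tendsto_atTop.mp hpoly) (ε / 3) (by linarith)
  refine ⟨N, fun n hn => ?_⟩
  have h1 := key (μn n) inferInstance (hsuppn n) (hmassn n)
  have h2 := key μ inferInstance hsupp hmass
  have h3 := hN n hn
  rw [Real.dist_eq] at h3 ⊢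
  have e2 : ∫ t, f t ∂(μn n) - ∫ t, f t ∂μ =
      (∫ t, f t ∂(μn n) - ∫ t, p.eval t ∂(μn n)) +
      (∫ t, p.eval t ∂(μn n) - ∫ t, p.eval t ∂μ) +
      (∫ t, p.eval t ∂μ - ∫ t, f t ∂μ) := by ring
  rw [e2]
  have h2' : |∫ t, p.eval t ∂μ - ∫ t, f t ∂μ| ≤ ε' * d := by rwa [abs_sub_comm]
  calc |_ + _ + _| ≤ |_ + _| + |∫ t, p.eval t ∂μ - ∫ t, f t ∂μ| := abs_add_le _ _
    _ ≤ |∫ t, f t ∂(μn n) - ∫ t, p.eval t ∂(μn n)| +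
        |∫ t, p.eval t ∂(μn n) - ∫ t, p.eval t ∂μ| +
        |∫ t, p.eval t ∂μ - ∫ t, f t ∂μ| := by gcongr; exact abs_add_le _ _
    _ < ε := by linarith

/-- Let `μ, μ_n` be finite Borel measures on `[0, K]`, all of total mass
`d`, whose moments converge: `∫ t^m dμ_n → ∫ t^m dμ` for all `m`.  Then for every
`λ ∈ [0, K]`, `limsup_n μ_n([0,λ]) ≤ μ([0,λ])`, and `μ([0,λ])` is the limit as `ε → 0⁺` of
both `liminf_n μ_n([0,λ+ε])` and `limsup_n μ_n([0,λ+ε])`. -/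
theorem spectral_density_approximation
    (K d : ℝ) (hK : 0 ≤ K) (hd : 0 ≤ d)
    (μ : Measure ℝ) (μn : ℕ → Measure ℝ)
    [IsFiniteMeasure μ] [∀ n, IsFiniteMeasure (μn n)]
    (hsupp : μ (Set.Icc 0 K)ᶜ = 0) (hsuppn : ∀ n, μn n (Set.Icc 0 K)ᶜ = 0)
    (hmass : μ Set.univ = ENNReal.ofReal d)
    (hmassn : ∀ n, μn n Set.univ = ENNReal.ofReal d)
    (hmom : ∀ m : ℕ, Tendsto (fun n => ∫ t, t ^ m ∂(μn n)) atTop (nhds (∫ t, t ^ m ∂μ)))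
    (lam : ℝ) (hlam : lam ∈ Set.Icc 0 K) :
    limsup (fun n => (μn n (Set.Icc 0 lam)).toReal) atTop ≤ (μ (Set.Icc 0 lam)).toReal ∧
    Tendsto (fun ε => liminf (fun n => (μn n (Set.Icc 0 (lam + ε))).toReal) atTop)
      (nhdsWithin 0 (Set.Ioi 0)) (nhds ((μ (Set.Icc 0 lam)).toReal)) ∧
    Tendsto (fun ε => limsup (fun n => (μn n (Set.Icc 0 (lam + ε))).toReal) atTop)
      (nhdsWithin 0 (Set.Ioi 0)) (nhds ((μ (Set.Icc 0 lam)).toReal)) := by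
  have hWt : ∀ {a b : ℝ}, a < b →
      Tendsto (fun n => ∫ t, trap a b t ∂(μn n)) atTop (𝓝 (∫ t, trap a b t ∂μ)) :=
    fun {a b} _ => aux_W K d hd μ μn hsupp hsuppn hmass hmassn hmom _ (trap_cont a b)
      (trap_abs a b)
  have hlow : ∀ {a b : ℝ}, a < b → ∀ (ν : Measure ℝ) (_ : IsFiniteMeasure ν),
      (ν (Set.Icc 0 a)).toReal ≤ ∫ t, trap a b t ∂ν := by
    intro a b h ν inst
    haveI := inst
    rw [← measureReal_def, ← integral_indicator_one measurableSet_Icc]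
    refine integral_mono ((integrable_const (1:ℝ)).indicator measurableSet_Icc)
      (aux_integrable (trap_cont a b) (Eventually.of_forall (trap_abs a b))) ?_
    intro t
    by_cases ht : t ∈ Set.Icc 0 a
    · rw [Set.indicator_of_mem ht]
      simpa using (trap_eq_one h ht.2).ge
    · rw [Set.indicator_of_notMem ht]
      exact trap_nonneg a b t
  have hhigh : ∀ {a b : ℝ}, a < b → ∀ (ν : Measure ℝ) (_ : IsFiniteMeasure ν),
      ν (Set.Icc 0 K)ᶜ = 0 → ∫ t, trap a b t ∂ν ≤ (ν (Set.Icc 0 b)).toReal := by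
    intro a b h ν inst h0
    haveI := inst
    rw [← measureReal_def, ← integral_indicator_one measurableSet_Icc]
    refine integral_mono_ae (aux_integrable (trap_cont a b) (Eventually.of_forall (trap_abs a b)))
      ((integrable_const (1:ℝ)).indicator measurableSet_Icc) ?_
    filter_upwards [aux_ae_mem h0] with t ht
    by_cases htb : t ≤ b
    · have hmem : t ∈ Set.Icc 0 b := ⟨ht.1, htb⟩
      rw [Set.indicator_of_mem hmem]
      simpa using trap_le_one a b t
    · push_neg at htb
      rw [Set.indicator_of_notMem (by simp only [Set.mem_Icc, not_and]; intro _; linarith),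
        trap_eq_zero h htb.le]
  have gten : ∀ a : ℝ,
      Tendsto (fun δ => (μ (Set.Icc 0 (a + δ))).toReal) (𝓝[>] (0:ℝ))
        (𝓝 ((μ (Set.Icc 0 a)).toReal)) := by
    intro a
    have hI : ⋂ r > (0:ℝ), Set.Icc 0 (a + r) = Set.Icc 0 a := by
      ext t
      simp only [Set.mem_iInter, Set.mem_Icc]
      constructor
      · intro h
        refine ⟨(h 1 one_pos).1, ?_⟩
        by_contra hc
        push_neg at hc
        linarith [(h ((t - a) / 2) (by linarith)).2]
      · intro h r hr
        exact ⟨h.1, by linarith [h.2]⟩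
    have h := tendsto_measure_biInter_gt (μ := μ) (s := fun r => Set.Icc 0 (a + r)) (a := 0)
      (fun r _ => measurableSet_Icc.nullMeasurableSet)
      (fun i j hi hij => Set.Icc_subset_Icc le_rfl (by linarith))
      ⟨1, one_pos, measure_ne_top μ _⟩
    rw [hI] at h
    exact (ENNReal.tendsto_toReal (measure_ne_top μ _)).comp h
  have hBl : ∀ a : ℝ, IsBoundedUnder (· ≤ ·) atTop (fun n => (μn n (Set.Icc 0 a)).toReal) :=
    fun a => isBoundedUnder_of ⟨d, fun n =>
      ENNReal.toReal_le_of_le_ofReal hd (le_trans (measure_mono (Set.subset_univ _))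
        (hmassn n).le)⟩
  have hBg : ∀ a : ℝ, IsBoundedUnder (· ≥ ·) atTop (fun n => (μn n (Set.Icc 0 a)).toReal) :=
    fun a => isBoundedUnder_of ⟨0, fun n => ENNReal.toReal_nonneg⟩
  have upper : ∀ (a : ℝ), ∀ δ > (0:ℝ),
      limsup (fun n => (μn n (Set.Icc 0 a)).toReal) atTop ≤ (μ (Set.Icc 0 (a + δ))).toReal := by
    intro a δ hδ
    have hab : a < a + δ := by linarith
    calc limsup (fun n => (μn n (Set.Icc 0 a)).toReal) atTop
        ≤ limsup (fun n => ∫ t, trap a (a+δ) t ∂(μn n)) atTop :=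
          limsup_le_limsup (Eventually.of_forall fun n => hlow hab (μn n) inferInstance)
            ((hBg a).isCoboundedUnder_le) ((hWt hab).isBoundedUnder_le)
      _ = ∫ t, trap a (a+δ) t ∂μ := (hWt hab).limsup_eq
      _ ≤ (μ (Set.Icc 0 (a+δ))).toReal := hhigh hab μ inferInstance hsupp
  have part1 : ∀ a : ℝ,
      limsup (fun n => (μn n (Set.Icc 0 a)).toReal) atTop ≤ (μ (Set.Icc 0 a)).toReal := by
    intro a
    refine ge_of_tendsto (gten a) ?_
    filter_upwards [self_mem_nhdsWithin] with δ hδ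
    exact upper a δ hδ
  have lower : ∀ ε > (0:ℝ), (μ (Set.Icc 0 lam)).toReal ≤
      liminf (fun n => (μn n (Set.Icc 0 (lam+ε))).toReal) atTop := by
    intro ε hε
    have hab : lam < lam + ε := by linarith
    calc (μ (Set.Icc 0 lam)).toReal ≤ ∫ t, trap lam (lam+ε) t ∂μ := hlow hab μ inferInstance
      _ = liminf (fun n => ∫ t, trap lam (lam+ε) t ∂(μn n)) atTop := (hWt hab).liminf_eq.symm
      _ ≤ liminf (fun n => (μn n (Set.Icc 0 (lam+ε))).toReal) atTop :=
          liminf_le_liminf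
            (Eventually.of_forall fun n => hhigh hab (μn n) inferInstance (hsuppn n))
            ((hWt hab).isBoundedUnder_ge) ((hBl _).isCoboundedUnder_ge)
  refine ⟨part1 lam, ?_, ?_⟩
  · refine tendsto_of_tendsto_of_tendsto_of_le_of_le' tendsto_const_nhds (gten lam) ?_ ?_
    · filter_upwards [self_mem_nhdsWithin] with ε hε
      exact lower ε hε
    · filter_upwards [self_mem_nhdsWithin] with ε hε
      exact le_trans (liminf_le_limsup (hBl _) (hBg _)) (part1 (lam + ε))
  · refine tendsto_of_tendsto_of_tendsto_of_le_of_le' tendsto_const_nhds (gten lam) ?_ ?_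
    · filter_upwards [self_mem_nhdsWithin] with ε hε
      exact le_trans (lower ε hε) (liminf_le_limsup (hBl _) (hBg _))
    · filter_upwards [self_mem_nhdsWithin] with ε hε
      exact part1 (lam + ε)
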